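/- Let G be a multigraph realizing degree sequence d with m_d light double-edges and no other non-simple edges, and fix a simple two-star v_1v_3v_5 in G. Then the number of light simple ordered two-stars in G that share no nodes with v_1v_3v_5 is at least L_2 - 8·m_d·d_h - 6·B_1 - 3·d_h², where B_1 = Σ_{i=1}^{d_1} d_{h+i}. -/

import Mathlib

set_option maxRecDepth 4000


open Finset

/-- A multigraph on `n` nodes, given by a symmetric multiplicity function.
`mult i i` is the multiplicity of the loop at `i`. -/
structure Multigraph (n : ℕ) where
  mult : Fin n → Fin n → ℕ
  symm : ∀ i j, mult i j = mult j i

namespace Multigraph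

/-- The degree of a node: a loop counts twice. -/
def deg {n : ℕ} (G : Multigraph n) (i : Fin n) : ℕ :=
  2 * G.mult i i + ∑ j ∈ Finset.univ.filter (fun j => j ≠ i), G.mult i j

/-- `i j` is a simple edge: non-loop of multiplicity exactly 1. -/
def Simple {n : ℕ} (G : Multigraph n) (i j : Fin n) : Prop :=
  i ≠ j ∧ G.mult i j = 1

instance {n : ℕ} (G : Multigraph n) (i j : Fin n) : Decidable (G.Simple i j) :=
  inferInstanceAs (Decidable (i ≠ j ∧ G.mult i j = 1))

end Multigraph

/-- The (0-indexed) degree sequence extended to all of `ℕ` by zero. -/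
def dExt (n : ℕ) (d : Fin n → ℕ) (i : ℕ) : ℕ :=
  if h : i < n then d ⟨i, h⟩ else 0

lemma card_filter_prod {α β : Type*} [Fintype α] [Fintype β] (p : α × β → Prop) [DecidablePred p] :
    (univ.filter p).card = ∑ a : α, (univ.filter fun b => p (a, b)).card := by
  classical
  rw [Finset.card_filter, Fintype.sum_prod_type]
  refine Finset.sum_congr rfl fun a _ => ?_
  rw [Finset.card_filter]

lemma sum_le_sorted (f : ℕ → ℕ) (hf : ∀ i j : ℕ, i ≤ j → f j ≤ f i) :
    ∀ (k h : ℕ) (A : Finset ℕ), A.card = k → (∀ a ∈ A, h ≤ a) →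
      ∑ a ∈ A, f a ≤ ∑ j ∈ Finset.range k, f (h + j) := by
  intro k
  induction k with
  | zero => intro h A hc _; rw [Finset.card_eq_zero] at hc; simp [hc]
  | succ k ih =>
    intro h A hc hA
    have hne : A.Nonempty := Finset.card_pos.mp (by omega)
    set m := A.min' hne with hm
    have hmA : m ∈ A := A.min'_mem hne
    have h1 : ∑ a ∈ A, f a = f m + ∑ a ∈ A.erase m, f a :=
      (Finset.add_sum_erase A f hmA).symm
    have h2 : ∑ a ∈ A.erase m, f a ≤ ∑ j ∈ Finset.range k, f ((h + 1) + j) := by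
      apply ih
      · simp [Finset.card_erase_of_mem hmA, hc]
      · intro a ha
        have haA := Finset.mem_of_mem_erase ha
        have := A.min'_le a haA
        have := Finset.ne_of_mem_erase ha
        have := hA a haA
        have := hA m hmA
        omega
    have h3 : ∑ j ∈ Finset.range (k+1), f (h + j)
        = ∑ j ∈ Finset.range k, f (h + (j + 1)) + f (h + 0) := Finset.sum_range_succ' _ k
    have h4 : ∑ j ∈ Finset.range k, f ((h+1) + j) = ∑ j ∈ Finset.range k, f (h + (j+1)) := by
      apply Finset.sum_congr rfl; intro j _; ring_nf
    have h5 : f m ≤ f h := hf h m (hA m hmA)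
    simp only [Nat.add_zero] at h3
    omega


/-- lower bound on the number of light simple ordered two-stars
node-disjoint from a fixed simple two-star `v₁v₃v₅`. -/
theorem stmt4 (n h md : ℕ) (G : Multigraph n) (d : Fin n → ℕ)
    (hdeg : ∀ i, G.deg i = d i)
    (hsorted : ∀ i j : Fin n, i ≤ j → d j ≤ d i)
    (hh1 : 1 ≤ h) (hhn : h ≤ n)
    (hdouble : (Finset.univ.filter (fun p : Fin n × Fin n =>
        p.1 ≠ p.2 ∧ G.mult p.1 p.2 = 2 ∧ (h ≤ p.1.val ∨ h ≤ p.2.val))).card = 2 * md)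
    (hnoloop : ∀ i : Fin n, G.mult i i = 0)
    (hmax : ∀ i j : Fin n, i ≠ j → G.mult i j ≤ 2)
    (hmultilight : ∀ i j : Fin n, i ≠ j → 2 ≤ G.mult i j → (h ≤ i.val ∨ h ≤ j.val))
    -- a fixed simple two-star v₁v₃v₅
    (v1 v3 v5 : Fin n) (hs13 : G.Simple v1 v3) (hs15 : G.Simple v1 v5) (hne35 : v3 ≠ v5) :
    ((∑ i ∈ Finset.univ.filter (fun i : Fin n => h ≤ i.val),
        Nat.descFactorial (d i) 2 : ℕ) : ℤ)
      - 8 * (md : ℤ) * (dExt n d (h - 1) : ℤ)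
      - 6 * ((∑ i ∈ Finset.range (dExt n d 0), dExt n d (h + i) : ℕ) : ℤ)
      - 3 * (dExt n d (h - 1) : ℤ) ^ 2
    ≤ ((Finset.univ.filter (fun t : Fin n × Fin n × Fin n =>
        h ≤ t.1.val ∧ G.Simple t.1 t.2.1 ∧ G.Simple t.1 t.2.2 ∧ t.2.1 ≠ t.2.2 ∧
        t.1 ≠ v1 ∧ t.1 ≠ v3 ∧ t.1 ≠ v5 ∧
        t.2.1 ≠ v1 ∧ t.2.1 ≠ v3 ∧ t.2.1 ≠ v5 ∧
        t.2.2 ≠ v1 ∧ t.2.2 ≠ v3 ∧ t.2.2 ≠ v5)).card : ℤ) := by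
  classical
  set D := dExt n d (h - 1) with hDdef
  set B := ∑ i ∈ Finset.range (dExt n d 0), dExt n d (h + i) with hBdef
  have hn0 : 0 < n := lt_of_lt_of_le hh1 hhn
  have hmono : ∀ i j : ℕ, i ≤ j → dExt n d j ≤ dExt n d i := by
    intro i j hij
    unfold dExt
    split_ifs with h1 h2 h2
    · exact hsorted ⟨i, h2⟩ ⟨j, h1⟩ hij
    · omega
    · exact Nat.zero_le _
    · exact Nat.zero_le _
  have hDlight : ∀ i : Fin n, h ≤ i.val → d i ≤ D := by
    intro i hi
    have : dExt n d i.val = d i := by simp [dExt, i.isLt]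
    rw [← this, hDdef]
    exact hmono (h-1) i.val (by omega)
  have hd0 : ∀ i : Fin n, d i ≤ dExt n d 0 := by
    intro i
    have : dExt n d i.val = d i := by simp [dExt, i.isLt]
    rw [← this]
    exact hmono 0 i.val (Nat.zero_le _)
  -- neighborhoods
  set N1 : Fin n → Finset (Fin n) := fun c => univ.filter (fun j => G.mult c j = 1) with hN1def
  set N2 : Fin n → Finset (Fin n) := fun c => univ.filter (fun j => G.mult c j = 2) with hN2def
  have hsimple_mem : ∀ c j : Fin n, G.Simple c j ↔ j ∈ N1 c := by
    intro c j
    constructor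
    · rintro ⟨hne, hm⟩; simp [hN1def, hm]
    · intro hj
      simp [hN1def] at hj
      refine ⟨?_, hj⟩
      rintro rfl; rw [hnoloop c] at hj; omega
  have hdc : ∀ c : Fin n, d c = (N1 c).card + 2 * (N2 c).card := by
    intro c
    have key : ∀ j : Fin n, G.mult c j =
        (if G.mult c j = 1 then 1 else 0) + 2 * (if G.mult c j = 2 then 1 else 0) := by
      intro j
      by_cases hjc : j = c
      · subst hjc; simp [hnoloop]
      · have := hmax c j (fun hh => hjc hh.symm)
        split_ifs <;> omega
    have h0 : d c = ∑ j ∈ univ.filter (fun j => j ≠ c), G.mult c j := by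
      rw [← hdeg c]; unfold Multigraph.deg; rw [hnoloop c]; ring
    have h1 : ∑ j ∈ univ.filter (fun j => j ≠ c), G.mult c j = ∑ j : Fin n, G.mult c j := by
      rw [Finset.filter_ne']
      exact Finset.sum_erase _ (hnoloop c)
    have h2 : ∑ j : Fin n, G.mult c j
        = ∑ j : Fin n, ((if G.mult c j = 1 then 1 else 0) + 2 * (if G.mult c j = 2 then 1 else 0)) :=
      Finset.sum_congr rfl (fun j _ => key j)
    rw [h0, h1, h2, Finset.sum_add_distrib, ← Finset.mul_sum]
    congr 1
    · rw [Finset.card_filter]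
    · congr 1; rw [Finset.card_filter]
  -- counts
  set S := univ.filter (fun t : Fin n × Fin n × Fin n =>
      h ≤ t.1.val ∧ G.Simple t.1 t.2.1 ∧ G.Simple t.1 t.2.2 ∧ t.2.1 ≠ t.2.2) with hSdef
  have hfull : ∀ c : Fin n, (univ.filter (fun q : Fin n × Fin n =>
      G.Simple c q.1 ∧ G.Simple c q.2 ∧ q.1 ≠ q.2)).card
      = (N1 c).card * (N1 c).card - (N1 c).card := by
    intro c
    have he : univ.filter (fun q : Fin n × Fin n => G.Simple c q.1 ∧ G.Simple c q.2 ∧ q.1 ≠ q.2)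
        = (N1 c).offDiag := by
      ext q
      simp only [Finset.mem_offDiag, Finset.mem_filter, Finset.mem_univ, true_and]
      rw [← hsimple_mem, ← hsimple_mem]
    rw [he, Finset.offDiag_card]
  have hScard : S.card = ∑ c ∈ univ.filter (fun c : Fin n => h ≤ c.val),
      ((N1 c).card * (N1 c).card - (N1 c).card) := by
    rw [hSdef, card_filter_prod, Finset.sum_filter]
    refine Finset.sum_congr rfl fun c _ => ?_
    by_cases hc : h ≤ c.val
    · rw [if_pos hc, ← hfull c]
      exact congrArg Finset.card (Finset.filter_congr (fun q _ => by simp [hc]))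
    · rw [if_neg hc, Finset.card_eq_zero, Finset.filter_eq_empty_iff]
      intro q _
      simp [hc]
  have hN2sum : ∑ c ∈ univ.filter (fun c : Fin n => h ≤ c.val), (N2 c).card ≤ 2 * md := by
    have e : (univ.filter (fun p : Fin n × Fin n => h ≤ p.1.val ∧ G.mult p.1 p.2 = 2)).card
        = ∑ c ∈ univ.filter (fun c : Fin n => h ≤ c.val), (N2 c).card := by
      rw [card_filter_prod, Finset.sum_filter]
      refine Finset.sum_congr rfl fun c _ => ?_
      by_cases hc : h ≤ c.val
      · rw [if_pos hc]
        exact congrArg Finset.card (Finset.filter_congr (fun j _ => by simp [hc, hN2def]))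
      · rw [if_neg hc, Finset.card_eq_zero, Finset.filter_eq_empty_iff]
        intro j _; simp [hc]
    rw [← e, ← hdouble]
    apply Finset.card_le_card
    intro p hp
    simp only [Finset.mem_filter, Finset.mem_univ, true_and] at hp ⊢
    obtain ⟨h1, h2⟩ := hp
    refine ⟨fun he => ?_, h2, Or.inl h1⟩
    rw [← he, hnoloop] at h2
    omega
  have claim1 : ∑ i ∈ univ.filter (fun i : Fin n => h ≤ i.val), Nat.descFactorial (d i) 2
      ≤ S.card + 8 * md * D := by
    have per : ∀ c ∈ univ.filter (fun c : Fin n => h ≤ c.val),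
        Nat.descFactorial (d c) 2
          ≤ ((N1 c).card * (N1 c).card - (N1 c).card) + 4 * (N2 c).card * D := by
      intro c hc
      simp only [Finset.mem_filter, Finset.mem_univ, true_and] at hc
      have hDl := hDlight c hc
      have hd := hdc c
      set s := (N1 c).card with hs'
      set t := (N2 c).card with ht'
      have hdf : Nat.descFactorial (d c) 2 = (d c - 1) * (d c) := by
        simp [Nat.descFactorial]
      have hs : s ≤ s * s := by
        rcases Nat.eq_zero_or_pos s with h0 | h0
        · simp [h0]
        · calc s = 1 * s := (one_mul s).symm
            _ ≤ s * s := Nat.mul_le_mul h0 (le_refl s)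
      rw [hdf]
      rcases Nat.eq_zero_or_pos (d c) with h0 | h0
      · simp [h0]
      · have hdZ : (d c : ℤ) = (s : ℤ) + 2 * t := by exact_mod_cast hd
        have hDZ : (d c : ℤ) ≤ (D : ℤ) := by exact_mod_cast hDl
        zify [h0, hs]
        nlinarith [mul_nonneg (by positivity : (0:ℤ) ≤ 4 * (t:ℤ))
          (by linarith : (0:ℤ) ≤ (D:ℤ) - (d c : ℤ)), sq_nonneg ((t:ℤ))]
    calc ∑ i ∈ univ.filter (fun i : Fin n => h ≤ i.val), Nat.descFactorial (d i) 2
        ≤ ∑ c ∈ univ.filter (fun c : Fin n => h ≤ c.val),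
            (((N1 c).card * (N1 c).card - (N1 c).card) + 4 * (N2 c).card * D) :=
          Finset.sum_le_sum per
      _ = (∑ c ∈ univ.filter (fun c : Fin n => h ≤ c.val),
            ((N1 c).card * (N1 c).card - (N1 c).card))
          + 4 * D * (∑ c ∈ univ.filter (fun c : Fin n => h ≤ c.val), (N2 c).card) := by
          rw [Finset.sum_add_distrib]
          congr 1
          rw [Finset.mul_sum]
          exact Finset.sum_congr rfl fun c _ => by ring
      _ ≤ S.card + 8 * md * D := by
          rw [← hScard]
          have h2 := hN2sum
          have h3 : 4 * D * (∑ c ∈ univ.filter (fun c : Fin n => h ≤ c.val), (N2 c).card)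
              ≤ 4 * D * (2 * md) := mul_le_mul' (le_refl (4 * D)) h2
          have e8 : 4 * D * (2 * md) = 8 * md * D := by ring
          omega
  -- target
  set T := univ.filter (fun t : Fin n × Fin n × Fin n =>
        h ≤ t.1.val ∧ G.Simple t.1 t.2.1 ∧ G.Simple t.1 t.2.2 ∧ t.2.1 ≠ t.2.2 ∧
        t.1 ≠ v1 ∧ t.1 ≠ v3 ∧ t.1 ≠ v5 ∧
        t.2.1 ≠ v1 ∧ t.2.1 ≠ v3 ∧ t.2.1 ≠ v5 ∧
        t.2.2 ≠ v1 ∧ t.2.2 ≠ v3 ∧ t.2.2 ≠ v5) with hTdef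
  have hbound1 : ∀ v : Fin n, (S.filter (fun t => t.1 = v)).card ≤ D * D := by
    intro v
    by_cases hv : h ≤ v.val
    · have hinj : (S.filter (fun t => t.1 = v)).card ≤ ((N1 v) ×ˢ (N1 v)).card := by
        apply Finset.card_le_card_of_injOn (fun t => (t.2.1, t.2.2))
        · intro t ht
          simp only [Finset.mem_coe, hSdef, Finset.mem_filter, Finset.mem_univ, true_and] at ht
          obtain ⟨⟨hl, hs1, hs2, hne⟩, h1⟩ := ht
          rw [h1] at hs1 hs2
          simp only [Finset.mem_coe, Finset.mem_product]
          exact ⟨(hsimple_mem _ _).1 hs1, (hsimple_mem _ _).1 hs2⟩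
        · intro t ht t' ht' he
          simp only [Finset.mem_coe, hSdef, Finset.mem_filter] at ht ht'
          have h1 : t.1 = v := ht.2
          have h1' : t'.1 = v := ht'.2
          have h2 := congrArg Prod.fst he
          have h3 := congrArg Prod.snd he
          simp only at h2 h3
          exact Prod.ext (h1.trans h1'.symm) (Prod.ext h2 h3)
      have hprod : ((N1 v) ×ˢ (N1 v)).card = (N1 v).card * (N1 v).card :=
        Finset.card_product _ _
      have hsd : (N1 v).card ≤ d v := by have := hdc v; omega
      have hDv : (N1 v).card ≤ D := le_trans hsd (hDlight v hv)
      calc (S.filter (fun t => t.1 = v)).card ≤ ((N1 v) ×ˢ (N1 v)).card := hinj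
        _ = (N1 v).card * (N1 v).card := hprod
        _ ≤ D * D := Nat.mul_le_mul hDv hDv
    · have he : S.filter (fun t => t.1 = v) = ∅ := by
        rw [Finset.filter_eq_empty_iff]
        intro t ht
        simp only [hSdef, Finset.mem_filter, Finset.mem_univ, true_and] at ht
        intro heq
        rw [heq] at ht
        exact hv ht.1
      simp [he]
  have hkey2 : ∀ w : Fin n, (univ.filter (fun q : Fin n × Fin n =>
      h ≤ q.1.val ∧ G.Simple q.1 w ∧ G.Simple q.1 q.2)).card ≤ B := by
    intro w
    set LN := univ.filter (fun c : Fin n => h ≤ c.val ∧ G.Simple c w) with hLN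
    have e : (univ.filter (fun q : Fin n × Fin n =>
        h ≤ q.1.val ∧ G.Simple q.1 w ∧ G.Simple q.1 q.2)).card
        = ∑ c ∈ LN, (N1 c).card := by
      rw [card_filter_prod, hLN, Finset.sum_filter]
      refine Finset.sum_congr rfl fun c _ => ?_
      by_cases hc : h ≤ c.val ∧ G.Simple c w
      · rw [if_pos hc]
        refine congrArg Finset.card (Finset.filter_congr (fun j _ => ?_))
        simp only [hc.1, hc.2, true_and]
        simpa [hN1def] using hsimple_mem c j
      · rw [if_neg hc, Finset.card_eq_zero, Finset.filter_eq_empty_iff]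
        intro j _
        intro hj
        exact hc ⟨hj.1, hj.2.1⟩
    rw [e]
    have e1 : ∑ c ∈ LN, (N1 c).card ≤ ∑ c ∈ LN, d c :=
      Finset.sum_le_sum (fun c _ => by have := hdc c; omega)
    have hcardimg : (LN.image Fin.val).card = LN.card :=
      Finset.card_image_of_injective LN Fin.val_injective
    have e2 : ∑ c ∈ LN, d c ≤ ∑ j ∈ Finset.range LN.card, dExt n d (h + j) := by
      have hmem : ∀ a ∈ LN.image Fin.val, h ≤ a := by
        intro a ha
        simp only [Finset.mem_image, hLN, Finset.mem_filter, Finset.mem_univ, true_and] at ha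
        obtain ⟨c, ⟨hc, _⟩, rfl⟩ := ha
        exact hc
      have := sum_le_sorted (dExt n d) hmono LN.card h (LN.image Fin.val) hcardimg hmem
      rw [Finset.sum_image (fun x _ y _ hxy => Fin.val_injective hxy)] at this
      have eq1 : ∑ c ∈ LN, dExt n d c.val = ∑ c ∈ LN, d c := by
        refine Finset.sum_congr rfl fun c _ => ?_
        simp [dExt, c.isLt]
      rw [eq1] at this
      exact this
    have e3 : LN.card ≤ dExt n d 0 := by
      have hsub : LN ⊆ N1 w := by
        intro c hc
        simp only [hLN, Finset.mem_filter, Finset.mem_univ, true_and] at hc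
        obtain ⟨_, hne, hm⟩ := hc
        apply (hsimple_mem w c).1
        exact ⟨fun hh => hne hh.symm, by rw [G.symm w c]; exact hm⟩
      have h1 := Finset.card_le_card hsub
      have h2 : (N1 w).card ≤ d w := by have := hdc w; omega
      exact le_trans h1 (le_trans h2 (hd0 w))
    have e4 : ∑ j ∈ Finset.range LN.card, dExt n d (h + j)
        ≤ ∑ j ∈ Finset.range (dExt n d 0), dExt n d (h + j) :=
      Finset.sum_le_sum_of_subset (Finset.range_subset_range.mpr e3)
    rw [hBdef]
    omega
  have hbound2 : ∀ v : Fin n, (S.filter (fun t => t.2.1 = v)).card ≤ B := by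
    intro v
    refine le_trans ?_ (hkey2 v)
    apply Finset.card_le_card_of_injOn (fun t => (t.1, t.2.2))
    · intro t ht
      simp only [Finset.mem_coe, hSdef, Finset.mem_filter, Finset.mem_univ, true_and] at ht
      obtain ⟨⟨hl, hs1, hs2, hne⟩, h1⟩ := ht
      rw [h1] at hs1
      simp only [Finset.mem_coe, Finset.mem_filter, Finset.mem_univ, true_and]
      exact ⟨hl, hs1, hs2⟩
    · intro t ht t' ht' he
      simp only [Finset.mem_coe, Finset.mem_filter] at ht ht'
      have h1 : t.2.1 = v := ht.2
      have h1' : t'.2.1 = v := ht'.2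
      have h2 := congrArg Prod.fst he
      have h3 := congrArg Prod.snd he
      simp only at h2 h3
      exact Prod.ext h2 (Prod.ext (h1.trans h1'.symm) h3)
  have hbound3 : ∀ v : Fin n, (S.filter (fun t => t.2.2 = v)).card ≤ B := by
    intro v
    refine le_trans ?_ (hkey2 v)
    apply Finset.card_le_card_of_injOn (fun t => (t.1, t.2.1))
    · intro t ht
      simp only [Finset.mem_coe, hSdef, Finset.mem_filter, Finset.mem_univ, true_and] at ht
      obtain ⟨⟨hl, hs1, hs2, hne⟩, h1⟩ := ht
      rw [h1] at hs2
      simp only [Finset.mem_coe, Finset.mem_filter, Finset.mem_univ, true_and]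
      exact ⟨hl, hs2, hs1⟩
    · intro t ht t' ht' he
      simp only [Finset.mem_coe, Finset.mem_filter] at ht ht'
      have h1 : t.2.2 = v := ht.2
      have h1' : t'.2.2 = v := ht'.2
      have h2 := congrArg Prod.fst he
      have h3 := congrArg Prod.snd he
      simp only at h2 h3
      exact Prod.ext h2 (Prod.ext h3 (h1.trans h1'.symm))
  have claim2 : S.card ≤ T.card + 3 * (D * D) + 6 * B := by
    have hTeq : T = S.filter (fun t => t.1 ≠ v1 ∧ t.1 ≠ v3 ∧ t.1 ≠ v5 ∧
        t.2.1 ≠ v1 ∧ t.2.1 ≠ v3 ∧ t.2.1 ≠ v5 ∧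
        t.2.2 ≠ v1 ∧ t.2.2 ≠ v3 ∧ t.2.2 ≠ v5) := by
      rw [hTdef, hSdef, Finset.filter_filter]
      exact Finset.filter_congr fun t _ => by tauto
    have hsplit := Finset.card_filter_add_card_filter_not
      (s := S) (p := fun t => t.1 ≠ v1 ∧ t.1 ≠ v3 ∧ t.1 ≠ v5 ∧
        t.2.1 ≠ v1 ∧ t.2.1 ≠ v3 ∧ t.2.1 ≠ v5 ∧
        t.2.2 ≠ v1 ∧ t.2.2 ≠ v3 ∧ t.2.2 ≠ v5)
    have hsub : S.filter (fun t => ¬ (t.1 ≠ v1 ∧ t.1 ≠ v3 ∧ t.1 ≠ v5 ∧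
        t.2.1 ≠ v1 ∧ t.2.1 ≠ v3 ∧ t.2.1 ≠ v5 ∧
        t.2.2 ≠ v1 ∧ t.2.2 ≠ v3 ∧ t.2.2 ≠ v5))
        ⊆ (S.filter (fun t => t.1 = v1)) ∪ (S.filter (fun t => t.1 = v3))
          ∪ (S.filter (fun t => t.1 = v5)) ∪ (S.filter (fun t => t.2.1 = v1))
          ∪ (S.filter (fun t => t.2.1 = v3)) ∪ (S.filter (fun t => t.2.1 = v5))
          ∪ (S.filter (fun t => t.2.2 = v1)) ∪ (S.filter (fun t => t.2.2 = v3))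
          ∪ (S.filter (fun t => t.2.2 = v5)) := by
      intro t ht
      simp only [Finset.mem_filter, Finset.mem_union] at ht ⊢
      obtain ⟨hS, hn⟩ := ht
      by_cases e1 : t.1 = v1
      · exact Or.inl (Or.inl (Or.inl (Or.inl (Or.inl (Or.inl (Or.inl (Or.inl (⟨hS, e1⟩))))))))
      by_cases e2 : t.1 = v3
      · exact Or.inl (Or.inl (Or.inl (Or.inl (Or.inl (Or.inl (Or.inl (Or.inr (⟨hS, e2⟩))))))))
      by_cases e3 : t.1 = v5
      · exact Or.inl (Or.inl (Or.inl (Or.inl (Or.inl (Or.inl (Or.inr (⟨hS, e3⟩)))))))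
      by_cases e4 : t.2.1 = v1
      · exact Or.inl (Or.inl (Or.inl (Or.inl (Or.inl (Or.inr (⟨hS, e4⟩))))))
      by_cases e5 : t.2.1 = v3
      · exact Or.inl (Or.inl (Or.inl (Or.inl (Or.inr (⟨hS, e5⟩)))))
      by_cases e6 : t.2.1 = v5
      · exact Or.inl (Or.inl (Or.inl (Or.inr (⟨hS, e6⟩))))
      by_cases e7 : t.2.2 = v1
      · exact Or.inl (Or.inl (Or.inr (⟨hS, e7⟩)))
      by_cases e8 : t.2.2 = v3
      · exact Or.inl (Or.inr (⟨hS, e8⟩))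
      by_cases e9 : t.2.2 = v5
      · exact Or.inr (⟨hS, e9⟩)
      exact absurd ⟨e1, e2, e3, e4, e5, e6, e7, e8, e9⟩ hn
    have hcu : ∀ (X Y : Finset (Fin n × Fin n × Fin n)) (x y : ℕ),
        X.card ≤ x → Y.card ≤ y → (X ∪ Y).card ≤ x + y := fun X Y x y hx hy =>
      (Finset.card_union_le X Y).trans (Nat.add_le_add hx hy)
    have h9 := hcu _ _ _ _ (hcu _ _ _ _ (hcu _ _ _ _ (hcu _ _ _ _ (hcu _ _ _ _
      (hcu _ _ _ _ (hcu _ _ _ _ (hcu _ _ _ _ (hbound1 v1) (hbound1 v3)) (hbound1 v5))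
      (hbound2 v1)) (hbound2 v3)) (hbound2 v5)) (hbound3 v1)) (hbound3 v3)) (hbound3 v5)
    have hbad := le_trans (Finset.card_le_card hsub) h9
    rw [hTeq]
    omega
  have hsq : (D : ℤ) ^ 2 = (D : ℤ) * D := sq (D : ℤ)
  have c1' : ((∑ i ∈ univ.filter (fun i : Fin n => h ≤ i.val), Nat.descFactorial (d i) 2 : ℕ) : ℤ)
      ≤ (S.card : ℤ) + 8 * md * D := by exact_mod_cast claim1
  have c2' : (S.card : ℤ) ≤ (T.card : ℤ) + 3 * ((D:ℤ) * D) + 6 * B := by exact_mod_cast claim2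
  linarith
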